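/- For every $c \in (0,1)$, integer $N \geq 2$, and $\epsilon > 0$, there exists a sequence of sets $S_n \subseteq \{0,\dots,N-1\}^n$ such that $\liminf_{n\to\infty} |S_n|/N^n \geq c$ and for all sufficiently large $n$, $M(S_n) \leq (1+\epsilon)\log_2 n$. -/

import Mathlib

open scoped BigOperators
open Filter

/-- The 0/1 cube in `ℤ^m`. -/
def cube (m : ℕ) : Set (Fin m → ℤ) := {v | ∀ i, v i = 0 ∨ v i = 1}

def cubeF (m : ℕ) : Finset (Fin m → ℤ) := Fintype.piFinset fun _ => ({0, 1} : Finset ℤ)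

lemma coe_cubeF (m : ℕ) : (cubeF m : Set (Fin m → ℤ)) = cube m := by
  ext v
  simp [cubeF, cube, Fintype.mem_piFinset]

lemma mem_cubeF {m : ℕ} {v : Fin m → ℤ} : v ∈ cubeF m ↔ v ∈ cube m := by
  rw [← coe_cubeF]; rfl

lemma card_cubeF (m : ℕ) : (cubeF m).card = 2 ^ m := by
  simp [cubeF, Fintype.card_piFinset]

/-- weight of a subset -/
noncomputable def wt (p : ℝ) {α : Type*} (B S : Finset α) : ℝ :=
  p ^ S.card * (1 - p) ^ (B.card - S.card)

lemma wt_nonneg {p : ℝ} (hp0 : 0 ≤ p) (hp1 : p ≤ 1) {α : Type*} (B S : Finset α) :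
    0 ≤ wt p B S :=
  mul_nonneg (pow_nonneg hp0 _) (pow_nonneg (by linarith) _)

lemma wt_pos {p : ℝ} (hp0 : 0 < p) (hp1 : p < 1) {α : Type*} (B S : Finset α) :
    0 < wt p B S :=
  mul_pos (pow_pos hp0 _) (pow_pos (by linarith) _)

lemma sum_wt {α : Type*} [DecidableEq α] (B : Finset α) (p : ℝ) :
    ∑ S ∈ B.powerset, wt p B S = 1 := by
  have h := Finset.prod_add (fun _ : α => p) (fun _ : α => 1 - p) B
  simp only [Finset.prod_const, add_sub_cancel, one_pow] at h
  refine Eq.trans (Finset.sum_congr rfl fun S hS => ?_) h.symm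
  rw [Finset.mem_powerset] at hS
  rw [wt, Finset.card_sdiff_of_subset hS]

lemma sum_wt_subset {α : Type*} [DecidableEq α] {B I : Finset α} (hI : I ⊆ B) (p : ℝ) :
    ∑ S ∈ B.powerset, (if I ⊆ S then wt p B S else 0) = p ^ I.card := by
  rw [← Finset.sum_filter]
  have key : ∑ S ∈ (B.powerset.filter fun S => I ⊆ S), wt p B S
      = ∑ S' ∈ (B \ I).powerset, p ^ I.card * wt p (B \ I) S' := by
    refine Finset.sum_nbij' (fun S => S \ I) (fun S' => S' ∪ I) ?_ ?_ ?_ ?_ ?_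
    · intro S hS
      simp only [Finset.mem_filter, Finset.mem_powerset] at hS ⊢
      exact Finset.sdiff_subset_sdiff hS.1 (le_refl _)
    · intro S' hS'
      simp only [Finset.mem_filter, Finset.mem_powerset] at hS' ⊢
      constructor
      · exact Finset.union_subset (hS'.trans (Finset.sdiff_subset)) hI
      · exact Finset.subset_union_right
    · intro S hS
      simp only [Finset.mem_filter, Finset.mem_powerset] at hS
      exact Finset.sdiff_union_of_subset hS.2
    · intro S' hS'
      simp only [Finset.mem_powerset] at hS'
      have hd : Disjoint S' I := Finset.disjoint_of_subset_left hS' Finset.sdiff_disjoint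
      rw [Finset.union_sdiff_cancel_right hd]
    · intro S hS
      simp only [Finset.mem_filter, Finset.mem_powerset] at hS
      have hIS : I ⊆ S := hS.2
      have hSB : S ⊆ B := hS.1
      have h1 : (S \ I).card = S.card - I.card := Finset.card_sdiff_of_subset hIS
      have h2 : (B \ I).card = B.card - I.card := Finset.card_sdiff_of_subset hI
      have hcIS : I.card ≤ S.card := Finset.card_le_card hIS
      have hcSB : S.card ≤ B.card := Finset.card_le_card hSB
      rw [wt, wt, h1, h2, ← mul_assoc, ← pow_add]
      congr 2
      · omega
      · omega
  rw [key, ← Finset.mul_sum, sum_wt, mul_one]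

lemma sum_wt_card {α : Type*} [DecidableEq α] (B : Finset α) (p : ℝ) :
    ∑ S ∈ B.powerset, wt p B S * (S.card : ℝ) = p * B.card := by
  have hcard : ∀ S ∈ B.powerset, (S.card : ℝ) = ∑ x ∈ B, (if ({x} : Finset α) ⊆ S then (1:ℝ) else 0) := by
    intro S hS
    rw [Finset.mem_powerset] at hS
    simp only [Finset.singleton_subset_iff]
    rw [Finset.sum_boole]
    congr 1
    rw [Finset.filter_mem_eq_inter, Finset.inter_eq_right.mpr hS]
  rw [Finset.sum_congr rfl (fun S hS => by rw [hcard S hS])]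
  simp only [Finset.mul_sum, mul_ite, mul_one, mul_zero]
  rw [Finset.sum_comm]
  have : ∀ x ∈ B, ∑ S ∈ B.powerset, (if ({x} : Finset α) ⊆ S then wt p B S else 0) = p := by
    intro x hx
    rw [sum_wt_subset (Finset.singleton_subset_iff.mpr hx), Finset.card_singleton, pow_one]
  rw [Finset.sum_congr rfl this, Finset.sum_const, nsmul_eq_mul, mul_comm]

/-- `S` contains an affine copy of the `m`-dimensional 0/1 cube: there is a map
`ι` which is affine (of the form `y ↦ A y + z` on the cube), injective on the
cube, and whose image of the cube is contained in `S`. -/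
def HasCube {n : ℕ} (S : Set (Fin n → ℤ)) (m : ℕ) : Prop :=
  ∃ ι : (Fin m → ℤ) → (Fin n → ℤ),
    (∃ A : Matrix (Fin n) (Fin m) ℤ, ∃ z : Fin n → ℤ, ∀ y ∈ cube m, ι y = A.mulVec y + z) ∧
    Set.InjOn ι (cube m) ∧ ι '' (cube m) ⊆ S

/-- `M(S)`: the largest `m` such that `S` contains an affine copy of the `m`-cube. -/
noncomputable def Mval {n : ℕ} (S : Set (Fin n → ℤ)) : ℕ := sSup {m | HasCube S m}

/-- The box `{0,1,…,N-1}^n` inside `ℤ^n`. -/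
noncomputable def box (N n : ℕ) : Finset (Fin n → ℤ) := Fintype.piFinset fun _ => Finset.Icc 0 ((N : ℤ) - 1)

lemma card_box (N n : ℕ) (hN : 1 ≤ N) : (box N n).card = N ^ n := by
  show (Fintype.piFinset fun _ : Fin n => Finset.Icc 0 ((N : ℤ) - 1)).card = N ^ n
  simp only [Fintype.card_piFinset, Int.card_Icc, Finset.prod_const, Finset.card_univ,
    Fintype.card_fin]
  congr 1
  omega

/-- matrices with entries in [-(N-1), N-1] -/
noncomputable def MF (N n m : ℕ) : Finset (Matrix (Fin n) (Fin m) ℤ) :=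
  Fintype.piFinset fun _ => Fintype.piFinset fun _ => Finset.Icc (1 - (N:ℤ)) ((N:ℤ) - 1)

noncomputable def AZ (N n m : ℕ) : Finset (Matrix (Fin n) (Fin m) ℤ × (Fin n → ℤ)) :=
  (MF N n m) ×ˢ (box N n)

lemma card_AZ (N n m : ℕ) (hN : 1 ≤ N) :
    (AZ N n m).card = (2 * N - 1) ^ (n * m) * N ^ n := by
  rw [AZ, Finset.card_product, card_box N n hN]
  congr 1
  unfold MF
  refine (Fintype.card_piFinset _).trans ?_
  simp only [Fintype.card_piFinset, Int.card_Icc, Finset.prod_const, Finset.card_univ,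
    Fintype.card_fin]
  rw [← pow_mul, Nat.mul_comm m n]
  congr 1
  omega

/-- the affine image of the cube -/
def imgF (n m : ℕ) (az : Matrix (Fin n) (Fin m) ℤ × (Fin n → ℤ)) : Finset (Fin n → ℤ) :=
  (cubeF m).image fun y => az.1.mulVec y + az.2

def IsBadP {n : ℕ} (m : ℕ) (S : Finset (Fin n → ℤ)) (az : Matrix (Fin n) (Fin m) ℤ × (Fin n → ℤ)) : Prop :=
  Set.InjOn (fun y => az.1.mulVec y + az.2) (cube m) ∧ imgF n m az ⊆ S

open Classical in
noncomputable def Bad (N n m : ℕ) (S : Finset (Fin n → ℤ)) :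
    Finset (Matrix (Fin n) (Fin m) ℤ × (Fin n → ℤ)) :=
  (AZ N n m).filter (IsBadP m S)

lemma card_imgF_of_inj {n m : ℕ} {az : Matrix (Fin n) (Fin m) ℤ × (Fin n → ℤ)}
    (h : Set.InjOn (fun y => az.1.mulVec y + az.2) (cube m)) :
    (imgF n m az).card = 2 ^ m := by
  rw [imgF, Finset.card_image_of_injOn (by rw [coe_cubeF]; exact h), card_cubeF]

lemma card_imgF_le {n m : ℕ} (az : Matrix (Fin n) (Fin m) ℤ × (Fin n → ℤ)) :
    (imgF n m az).card ≤ 2 ^ m := by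
  refine le_trans (Finset.card_image_le) ?_
  rw [card_cubeF]

lemma sum_wt_bad (N n m : ℕ) {p : ℝ} (hp0 : 0 ≤ p) (hp1 : p ≤ 1) :
    ∑ S ∈ (box N n).powerset, wt p (box N n) S * ((Bad N n m S).card : ℝ)
      ≤ ((AZ N n m).card : ℝ) * p ^ (2 ^ m) := by
  classical
  have hcard : ∀ S : Finset (Fin n → ℤ), ((Bad N n m S).card : ℝ)
      = ∑ az ∈ AZ N n m, (if IsBadP m S az then (1:ℝ) else 0) := by
    intro S
    rw [Bad, Finset.sum_boole]
  calc ∑ S ∈ (box N n).powerset, wt p (box N n) S * ((Bad N n m S).card : ℝ)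
      = ∑ S ∈ (box N n).powerset, ∑ az ∈ AZ N n m, (if IsBadP m S az then wt p (box N n) S else 0) := by
        refine Finset.sum_congr rfl fun S _ => ?_
        rw [hcard, Finset.mul_sum]
        refine Finset.sum_congr rfl fun az _ => ?_
        split <;> simp
    _ = ∑ az ∈ AZ N n m, ∑ S ∈ (box N n).powerset, (if IsBadP m S az then wt p (box N n) S else 0) :=
        Finset.sum_comm
    _ ≤ ∑ az ∈ AZ N n m, p ^ (2 ^ m) := by
        refine Finset.sum_le_sum fun az _ => ?_
        by_cases hinj : Set.InjOn (fun y => az.1.mulVec y + az.2) (cube m)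
        · have step1 : ∑ S ∈ (box N n).powerset, (if IsBadP m S az then wt p (box N n) S else 0)
              ≤ ∑ S ∈ (box N n).powerset, (if imgF n m az ⊆ S then wt p (box N n) S else 0) := by
            refine Finset.sum_le_sum fun S _ => ?_
            by_cases hb : IsBadP m S az
            · rw [if_pos hb, if_pos hb.2]
            · rw [if_neg hb]
              split
              · exact wt_nonneg hp0 hp1 _ _
              · exact le_refl 0
          refine le_trans step1 ?_
          by_cases himg : imgF n m az ⊆ box N n
          · rw [sum_wt_subset himg, card_imgF_of_inj hinj]
          · have : ∀ S ∈ (box N n).powerset, (if imgF n m az ⊆ S then wt p (box N n) S else 0) = 0 := by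
              intro S hS
              rw [Finset.mem_powerset] at hS
              rw [if_neg fun h => himg (h.trans hS)]
            rw [Finset.sum_congr rfl this, Finset.sum_const, smul_zero]
            exact pow_nonneg hp0 _
        · have : ∀ S ∈ (box N n).powerset, (if IsBadP m S az then wt p (box N n) S else 0) = 0 := by
            intro S _
            rw [if_neg fun h => hinj h.1]
          rw [Finset.sum_congr rfl this, Finset.sum_const, smul_zero]
          exact pow_nonneg hp0 _
    _ = ((AZ N n m).card : ℝ) * p ^ (2 ^ m) := by rw [Finset.sum_const, nsmul_eq_mul]

lemma exists_good (N n m : ℕ) {p : ℝ} (hp0 : 0 < p) (hp1 : p < 1) :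
    ∃ S ∈ (box N n).powerset,
      p * ((box N n).card : ℝ) - (2:ℝ) ^ m * (((AZ N n m).card : ℝ) * p ^ (2 ^ m))
        ≤ (S.card : ℝ) - (2:ℝ) ^ m * ((Bad N n m S).card : ℝ) := by
  classical
  set B := box N n with hB
  set β : ℝ := p * (B.card : ℝ) - (2:ℝ) ^ m * (((AZ N n m).card : ℝ) * p ^ (2 ^ m)) with hβ
  have hsum : ∑ S ∈ B.powerset, wt p B S * β ≤
      ∑ S ∈ B.powerset, wt p B S * ((S.card : ℝ) - (2:ℝ) ^ m * ((Bad N n m S).card : ℝ)) := by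
    have h1 : ∑ S ∈ B.powerset, wt p B S * β = β := by
      rw [← Finset.sum_mul, sum_wt, one_mul]
    have h2 : ∑ S ∈ B.powerset, wt p B S * ((S.card : ℝ) - (2:ℝ) ^ m * ((Bad N n m S).card : ℝ))
        = p * (B.card : ℝ)
          - (2:ℝ) ^ m * ∑ S ∈ B.powerset, wt p B S * ((Bad N n m S).card : ℝ) := by
      rw [← sum_wt_card B p, Finset.mul_sum, ← Finset.sum_sub_distrib]
      refine Finset.sum_congr rfl fun S _ => by ring
    have h3 := sum_wt_bad N n m hp0.le hp1.le
    have h2m : (0:ℝ) ≤ (2:ℝ) ^ m := by positivity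
    rw [h1, h2, hβ]
    nlinarith [mul_le_mul_of_nonneg_left h3 h2m]
  obtain ⟨S, hS, hle⟩ := Finset.exists_le_of_sum_le ⟨∅, Finset.empty_mem_powerset B⟩ hsum
  exact ⟨S, hS, le_of_mul_le_mul_left hle (wt_pos hp0 hp1 B S)⟩

lemma box_mem_iff {N n : ℕ} {x : Fin n → ℤ} : x ∈ box N n ↔ ∀ i, 0 ≤ x i ∧ x i ≤ (N:ℤ) - 1 := by
  simp [_root_.box, Fintype.mem_piFinset, Finset.mem_Icc]

lemma exists_no_cube (N n m : ℕ) {p : ℝ} (hp0 : 0 < p) (hp1 : p < 1) :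
    ∃ S : Finset (Fin n → ℤ), S ⊆ box N n ∧
      p * ((box N n).card : ℝ) - (2:ℝ) ^ m * (((AZ N n m).card : ℝ) * p ^ (2 ^ m))
        ≤ (S.card : ℝ) ∧
      ¬ HasCube (↑S : Set (Fin n → ℤ)) m := by
  classical
  obtain ⟨S₀, hS₀mem, hS₀⟩ := exists_good N n m hp0 hp1
  rw [Finset.mem_powerset] at hS₀mem
  set R : Finset (Fin n → ℤ) := (Bad N n m S₀).biUnion (fun az => imgF n m az) with hR
  have hRcard : (R.card : ℝ) ≤ (2:ℝ) ^ m * ((Bad N n m S₀).card : ℝ) := by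
    have h1 : R.card ≤ ∑ az ∈ Bad N n m S₀, (imgF n m az).card := Finset.card_biUnion_le
    have h2 : ∑ az ∈ Bad N n m S₀, (imgF n m az).card ≤ ∑ _az ∈ Bad N n m S₀, 2 ^ m :=
      Finset.sum_le_sum fun az _ => card_imgF_le az
    have h3 : (∑ _az ∈ Bad N n m S₀, 2 ^ m) = (Bad N n m S₀).card * 2 ^ m := by
      rw [Finset.sum_const, smul_eq_mul]
    have h4 : (R.card : ℕ) ≤ (Bad N n m S₀).card * 2 ^ m := le_trans h1 (le_trans h2 (le_of_eq h3))
    calc (R.card : ℝ) ≤ (((Bad N n m S₀).card * 2 ^ m : ℕ) : ℝ) := by exact_mod_cast h4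
      _ = (2:ℝ) ^ m * ((Bad N n m S₀).card : ℝ) := by push_cast; ring
  refine ⟨S₀ \ R, (Finset.sdiff_subset).trans hS₀mem, ?_, ?_⟩
  · have hsd : (S₀.card : ℝ) - (R.card : ℝ) ≤ (((S₀ \ R).card : ℕ) : ℝ) := by
      have h1 : S₀.card ≤ (S₀ \ R).card + R.card := by
        calc S₀.card ≤ ((S₀ \ R) ∪ R).card := Finset.card_le_card (by
              intro x hx
              by_cases hxR : x ∈ R
              · exact Finset.mem_union_right _ hxR
              · exact Finset.mem_union_left _ (Finset.mem_sdiff.mpr ⟨hx, hxR⟩))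
          _ ≤ (S₀ \ R).card + R.card := Finset.card_union_le _ _
      have := (Nat.cast_le (α := ℝ)).mpr h1
      push_cast at this
      linarith
    linarith
  · rintro ⟨ι, ⟨A, z, hAff⟩, hInj, hImg⟩
    set f : (Fin m → ℤ) → (Fin n → ℤ) := fun y => A.mulVec y + z with hf
    have hzero : (0 : Fin m → ℤ) ∈ cube m := fun i => Or.inl rfl
    have hz : ι 0 = z := by
      rw [hAff 0 hzero, Matrix.mulVec_zero, zero_add]
    have hfι : ∀ y ∈ cube m, f y = ι y := fun y hy => (hAff y hy).symm
    have hiS : ∀ y ∈ cube m, ι y ∈ S₀ \ R := fun y hy => hImg ⟨y, hy, rfl⟩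
    have hiBox : ∀ y ∈ cube m, ι y ∈ box N n := fun y hy =>
      hS₀mem ((Finset.mem_sdiff.mp (hiS y hy)).1 : ι y ∈ S₀)
    -- A has small entries
    have hsingle : ∀ j : Fin m, (Pi.single j 1 : Fin m → ℤ) ∈ cube m := by
      intro j i
      by_cases h : i = j
      · subst h; right; simp
      · left; simp [Pi.single_eq_of_ne h]
    have hAmem : A ∈ MF N n m := by
      rw [MF]; refine Fintype.mem_piFinset.mpr ?_
      intro i
      rw [Fintype.mem_piFinset]
      intro j
      have hcol : A.mulVec (Pi.single j 1) = fun i => A i j := by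
        funext i
        rw [Matrix.mulVec_single]
        exact mul_one _
      have h1 : ι (Pi.single j 1) i = A i j + z i := by
        rw [hAff _ (hsingle j)]
        show (A.mulVec (Pi.single j 1)) i + z i = _
        rw [hcol]
      have hb1 := box_mem_iff.mp (hiBox _ (hsingle j)) i
      have hb2 := box_mem_iff.mp (hiBox 0 hzero) i
      rw [h1] at hb1
      rw [hz] at hb2
      rw [Finset.mem_Icc]
      omega
    have hazAZ : (A, z) ∈ AZ N n m := by
      rw [AZ, Finset.mem_product]
      exact ⟨hAmem, hz ▸ hiBox 0 hzero⟩
    have hBadaz : (A, z) ∈ Bad N n m S₀ := by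
      rw [Bad, Finset.mem_filter]
      refine ⟨hazAZ, ?_, ?_⟩
      · intro y₁ h₁ y₂ h₂ he
        exact hInj h₁ h₂ (by rw [← hfι y₁ h₁, ← hfι y₂ h₂]; exact he)
      · intro x hx
        rw [imgF, Finset.mem_image] at hx
        obtain ⟨y, hy, rfl⟩ := hx
        have hy' : y ∈ cube m := mem_cubeF.mp hy
        have := hiS y hy'
        rw [← hfι y hy'] at this
        exact (Finset.mem_sdiff.mp this).1
    have hmemR : f 0 ∈ R := by
      rw [hR]
      refine Finset.mem_biUnion.mpr ⟨(A, z), hBadaz, ?_⟩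
      rw [imgF, Finset.mem_image]
      exact ⟨0, mem_cubeF.mpr hzero, rfl⟩
    have hnotR : f 0 ∉ R := by
      have := hiS 0 hzero
      rw [← hfι 0 hzero] at this
      exact (Finset.mem_sdiff.mp this).2
    exact hnotR hmemR

lemma hasCube_mono {n : ℕ} {S : Set (Fin n → ℤ)} {k m : ℕ} (hmk : m ≤ k)
    (h : HasCube S k) : HasCube S m := by
  obtain ⟨ι, ⟨A, z, hAff⟩, hInj, hImg⟩ := h
  set pad : (Fin m → ℤ) → (Fin k → ℤ) := fun y i => if h' : (i : ℕ) < m then y ⟨i, h'⟩ else 0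
    with hpad
  have hpadcube : ∀ y ∈ cube m, pad y ∈ cube k := by
    intro y hy i
    by_cases h' : (i : ℕ) < m
    · simp only [hpad, dif_pos h']
      exact hy _
    · left
      simp only [hpad, dif_neg h']
  have hpadval : ∀ (y : Fin m → ℤ) (i : Fin m), pad y (Fin.castLE hmk i) = y i := by
    intro y i
    have h' : ((Fin.castLE hmk i : Fin k) : ℕ) < m := i.isLt
    simp only [hpad, dif_pos h']
    exact congrArg y (Fin.ext (by simp [Fin.coe_castLE]))
  refine ⟨fun y => ι (pad y), ⟨A.submatrix id (Fin.castLE hmk), z, ?_⟩, ?_, ?_⟩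
  · intro y hy
    show ι (pad y) = (A.submatrix id (Fin.castLE hmk)).mulVec y + z
    rw [hAff (pad y) (hpadcube y hy)]
    congr 1
    funext j
    show ∑ i : Fin k, A j i * pad y i = ∑ i : Fin m, A j (Fin.castLE hmk i) * y i
    rw [show (Finset.univ : Finset (Fin m)).sum (fun i => A j (Fin.castLE hmk i) * y i)
        = ∑ i ∈ Finset.univ.map (Fin.castLEEmb hmk), A j i * pad y i from ?_]
    · refine (Finset.sum_subset (Finset.subset_univ _) ?_).symm
      intro i _ hi
      have : ¬ ((i : ℕ) < m) := by
        intro hlt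
        exact hi (Finset.mem_map.mpr ⟨⟨i, hlt⟩, Finset.mem_univ _, by
          simp [Fin.castLEEmb, Fin.castLE]⟩)
      simp only [hpad, dif_neg this, mul_zero]
    · rw [Finset.sum_map]
      refine Finset.sum_congr rfl fun i _ => ?_
      have : (Fin.castLEEmb hmk) i = Fin.castLE hmk i := rfl
      rw [this, hpadval]
  · intro y₁ h₁ y₂ h₂ he
    have hp := hInj (hpadcube y₁ h₁) (hpadcube y₂ h₂) he
    funext i
    have := congrFun hp (Fin.castLE hmk i)
    rwa [hpadval, hpadval] at this
  · intro x hx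
    obtain ⟨y, hy, rfl⟩ := hx
    exact hImg ⟨pad y, hpadcube y hy, rfl⟩

lemma mval_lt_of_not_hasCube {n m : ℕ} {S : Set (Fin n → ℤ)} (h : ¬ HasCube S m) :
    Mval S ≤ m - 1 := by
  refine csSup_le' ?_
  intro k hk
  have hkm : ¬ m ≤ k := fun hle => h (hasCube_mono hle hk)
  omega

open Real in
lemma tendsto_key (lam C δ : ℝ) (hlam : 0 < lam) (hδ : 0 < δ) :
    Filter.Tendsto (fun x : ℝ => lam * x ^ ((1:ℝ) + δ) - C * x * Real.logb 2 x)
      Filter.atTop Filter.atTop := by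
  have h1 : Filter.Tendsto (fun x : ℝ => x ^ ((1:ℝ) + δ)) Filter.atTop Filter.atTop :=
    tendsto_rpow_atTop (by linarith : (0:ℝ) < 1 + δ)
  have h2 : Filter.Tendsto (fun x : ℝ => Real.log x / x ^ δ) Filter.atTop (nhds 0) :=
    (isLittleO_log_rpow_atTop hδ).tendsto_div_nhds_zero
  have h3 : Filter.Tendsto (fun x : ℝ => lam - C * ((1 / Real.log 2) * (Real.log x / x ^ δ)))
      Filter.atTop (nhds (lam - C * ((1 / Real.log 2) * 0))) := by
    exact (tendsto_const_nhds.sub ((tendsto_const_nhds.mul ((tendsto_const_nhds.mul h2)))))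
  rw [mul_zero, mul_zero, sub_zero] at h3
  have h4 : Filter.Tendsto
      (fun x : ℝ => x ^ ((1:ℝ) + δ) * (lam - C * ((1 / Real.log 2) * (Real.log x / x ^ δ))))
      Filter.atTop Filter.atTop := h1.atTop_mul_pos hlam h3
  refine h4.congr' ?_
  filter_upwards [Filter.eventually_ge_atTop (1:ℝ)] with x hx
  have hx0 : (0:ℝ) < x := lt_of_lt_of_le one_pos hx
  have hxd : (0:ℝ) < x ^ δ := Real.rpow_pos_of_pos hx0 δ
  have hsplit : x ^ ((1:ℝ) + δ) = x * x ^ δ := by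
    rw [Real.rpow_add hx0, Real.rpow_one]
  have hlogb : Real.logb 2 x = Real.log x / Real.log 2 := rfl
  rw [hsplit, hlogb]
  have hlog2 : Real.log 2 ≠ 0 := by
    have := Real.log_pos (by norm_num : (1:ℝ) < 2)
    linarith
  field_simp

open Real in
lemma eventual_ineq (K p c δ : ℝ) (hK : 1 ≤ K) (hc : 0 < c) (hcp : c < p) (hp1 : p < 1)
    (hδ : 0 < δ) (mf : ℕ → ℕ)
    (hml : ∀ n : ℕ, 2 ≤ n → (1 + δ) * Real.logb 2 n ≤ (mf n : ℝ))
    (hmu : ∀ n : ℕ, 2 ≤ n → (mf n : ℝ) ≤ (2 + δ) * Real.logb 2 n) :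
    ∀ᶠ n : ℕ in Filter.atTop,
      (2:ℝ) ^ (mf n) * K ^ (n * mf n) * p ^ (2 ^ (mf n)) ≤ p - c := by
  have hp0 : 0 < p := lt_trans hc hcp
  set lam : ℝ := -Real.log p with hlam_def
  have hlam : 0 < lam := by
    have := Real.log_neg hp0 hp1
    simp only [hlam_def]
    linarith
  have hLK : 0 ≤ Real.log K := Real.log_nonneg hK
  have hpc : 0 < p - c := by linarith
  set C : ℝ := (2 + δ) * (Real.log 2 + Real.log K) with hC_def
  have hlog2 : 0 < Real.log 2 := Real.log_pos (by norm_num)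
  have hC : 0 ≤ C := by
    apply mul_nonneg <;> nlinarith
  -- the eventual domination
  have hT := (tendsto_key lam C δ hlam hδ).comp tendsto_natCast_atTop_atTop (α := ℕ)
  have hEv : ∀ᶠ n : ℕ in Filter.atTop,
      -(Real.log (p - c)) ≤ lam * (n:ℝ) ^ ((1:ℝ) + δ) - C * n * Real.logb 2 n :=
    hT.eventually_ge_atTop _
  filter_upwards [hEv, Filter.eventually_ge_atTop 2] with n hn hn2
  have hn2R : (2:ℝ) ≤ (n:ℝ) := by exact_mod_cast hn2
  have hn0 : (0:ℝ) < n := by linarith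
  have hlogbn : 1 ≤ Real.logb 2 n := by
    rw [show (1:ℝ) = Real.logb 2 2 from (Real.logb_self_eq_one (by norm_num)).symm]
    exact Real.logb_le_logb_of_le (by norm_num) (by norm_num) hn2R
  -- rewrite LHS as exp
  have hK0 : (0:ℝ) < K := lt_of_lt_of_le one_pos hK
  have hLHS : (2:ℝ) ^ (mf n) * K ^ (n * mf n) * p ^ (2 ^ (mf n))
      = Real.exp ((mf n : ℝ) * Real.log 2 + ((n * mf n : ℕ) : ℝ) * Real.log K
          - ((2 ^ mf n : ℕ) : ℝ) * lam) := by
    have hpow : ∀ (x : ℝ), 0 < x → ∀ k : ℕ, x ^ k = Real.exp ((k:ℝ) * Real.log x) := by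
      intro x hx k
      rw [← Real.rpow_natCast x k, Real.rpow_def_of_pos hx, mul_comm]
    have hlogp : Real.log p = -lam := by rw [hlam_def]; ring
    rw [hpow 2 (by norm_num) (mf n), hpow K hK0 (n * mf n), hpow p hp0 (2 ^ mf n),
      ← Real.exp_add, ← Real.exp_add, hlogp]
    congr 1
    ring
  rw [hLHS, show p - c = Real.exp (Real.log (p - c)) from (Real.exp_log hpc).symm,
    Real.exp_le_exp]
  -- now the log inequality
  have hmfu := hmu n hn2
  have hmfl := hml n hn2
  have hmf_nonneg : (0:ℝ) ≤ (mf n : ℝ) := Nat.cast_nonneg _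
  have h2pow : (n:ℝ) ^ ((1:ℝ) + δ) ≤ ((2 ^ mf n : ℕ) : ℝ) := by
    have e1 : ((2 ^ mf n : ℕ) : ℝ) = (2:ℝ) ^ ((mf n : ℝ)) := by
      push_cast
      rw [Real.rpow_natCast]
    rw [e1]
    have e2 : (n:ℝ) ^ ((1:ℝ) + δ) = (2:ℝ) ^ ((1 + δ) * Real.logb 2 n) := by
      rw [mul_comm, Real.rpow_mul (by norm_num : (0:ℝ) ≤ 2),
        Real.rpow_logb (by norm_num) (by norm_num) hn0]
    rw [e2]
    exact Real.rpow_le_rpow_of_exponent_le (by norm_num) hmfl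
  have hpos_part : (mf n : ℝ) * Real.log 2 + ((n * mf n : ℕ) : ℝ) * Real.log K
      ≤ C * n * Real.logb 2 n := by
    have step : (mf n : ℝ) * Real.log 2 + ((n * mf n : ℕ) : ℝ) * Real.log K
        = (mf n : ℝ) * (Real.log 2 + (n:ℝ) * Real.log K) := by
      push_cast
      ring
    rw [step, hC_def]
    have hb1 : Real.log 2 + (n:ℝ) * Real.log K ≤ (n:ℝ) * (Real.log 2 + Real.log K) := by
      nlinarith
    have hb0 : (0:ℝ) ≤ Real.log 2 + (n:ℝ) * Real.log K := by nlinarith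
    calc (mf n : ℝ) * (Real.log 2 + (n:ℝ) * Real.log K)
        ≤ ((2 + δ) * Real.logb 2 n) * ((n:ℝ) * (Real.log 2 + Real.log K)) := by
          apply mul_le_mul hmfu hb1 hb0
          nlinarith
      _ = (2 + δ) * (Real.log 2 + Real.log K) * (n:ℝ) * Real.logb 2 n := by ring
  have hlam_part : lam * (n:ℝ) ^ ((1:ℝ) + δ) ≤ ((2 ^ mf n : ℕ) : ℝ) * lam := by
    calc lam * (n:ℝ) ^ ((1:ℝ) + δ) ≤ lam * ((2 ^ mf n : ℕ) : ℝ) :=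
          mul_le_mul_of_nonneg_left h2pow hlam.le
      _ = ((2 ^ mf n : ℕ) : ℝ) * lam := by ring
  linarith

/-- `f_N(n,c)`: the minimal value of `M(S)` over subsets `S` of the box of density at least `c`. -/
noncomputable def fN (N n : ℕ) (c : ℝ) : ℕ :=
  sInf {k | ∃ S : Finset (Fin n → ℤ), S ⊆ box N n ∧ c * (N : ℝ) ^ n ≤ S.card ∧
    Mval (S : Set (Fin n → ℤ)) = k}

theorem stmt13 (N : ℕ) (hN : 2 ≤ N) (c : ℝ) (hc0 : 0 < c) (hc1 : c < 1) (ε : ℝ) (hε : 0 < ε) :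
    ∃ S : (n : ℕ) → Finset (Fin n → ℤ),
      (∀ n, S n ⊆ box N n) ∧
      c ≤ Filter.liminf (fun n : ℕ => ((S n).card : ℝ) / (N : ℝ) ^ n) Filter.atTop ∧
      ∀ᶠ n : ℕ in Filter.atTop,
        (Mval ((S n : Finset (Fin n → ℤ)) : Set (Fin n → ℤ)) : ℝ) ≤ (1 + ε) * Real.logb 2 n := by
  classical
  have hN1 : 1 ≤ N := by omega
  set p : ℝ := (1 + c) / 2 with hp_def
  have hcp : c < p := by rw [hp_def]; linarith
  have hp1 : p < 1 := by rw [hp_def]; linarith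
  have hp0 : 0 < p := lt_trans hc0 hcp
  set δ : ℝ := ε / 2 with hδ_def
  have hδ : 0 < δ := by positivity
  set mf : ℕ → ℕ := fun n => ⌊(1 + δ) * Real.logb 2 n⌋₊ + 1 with hmf_def
  set K : ℝ := ((2 * N - 1 : ℕ) : ℝ) with hK_def
  have hK : 1 ≤ K := by
    rw [hK_def]
    have : (1:ℕ) ≤ 2 * N - 1 := by omega
    exact_mod_cast this
  -- bounds on mf
  have hml : ∀ n : ℕ, 2 ≤ n → (1 + δ) * Real.logb 2 n ≤ (mf n : ℝ) := by
    intro n _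
    have := Nat.lt_floor_add_one ((1 + δ) * Real.logb 2 n)
    rw [hmf_def]
    push_cast
    linarith
  have hlogb_nonneg : ∀ n : ℕ, 1 ≤ n → 0 ≤ Real.logb 2 n := by
    intro n hn
    apply Real.logb_nonneg (by norm_num)
    exact_mod_cast hn
  have hlogb_one : ∀ n : ℕ, 2 ≤ n → 1 ≤ Real.logb 2 n := by
    intro n hn
    rw [show (1:ℝ) = Real.logb 2 2 from (Real.logb_self_eq_one (by norm_num)).symm]
    refine Real.logb_le_logb_of_le (by norm_num) (by norm_num) ?_
    exact_mod_cast hn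
  have hmu : ∀ n : ℕ, 2 ≤ n → (mf n : ℝ) ≤ (2 + δ) * Real.logb 2 n := by
    intro n hn
    have h1 : (⌊(1 + δ) * Real.logb 2 n⌋₊ : ℝ) ≤ (1 + δ) * Real.logb 2 n :=
      Nat.floor_le (mul_nonneg (by linarith) (hlogb_nonneg n (by omega)))
    have h2 := hlogb_one n hn
    rw [hmf_def]
    push_cast
    nlinarith
  have hEv1 := eventual_ineq K p c δ hK hc0 hcp hp1 hδ mf hml hmu
  -- eventually exists good set
  have hP : ∀ᶠ n : ℕ in Filter.atTop,
      ∃ S : Finset (Fin n → ℤ), S ⊆ box N n ∧ c * (N:ℝ)^n ≤ (S.card : ℝ) ∧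
        ¬ HasCube (↑S : Set (Fin n → ℤ)) (mf n) := by
    filter_upwards [hEv1] with n hn
    obtain ⟨S, hSsub, hScard, hScube⟩ := exists_no_cube N n (mf n) hp0 hp1
    refine ⟨S, hSsub, ?_, hScube⟩
    have hbox : ((box N n).card : ℝ) = (N:ℝ)^n := by
      rw [card_box N n hN1]; push_cast; ring
    have hAZ : ((AZ N n (mf n)).card : ℝ) = K ^ (n * mf n) * (N:ℝ)^n := by
      rw [card_AZ N n (mf n) hN1, hK_def]; push_cast; ring
    rw [hbox, hAZ] at hScard
    have hNpow : (0:ℝ) < (N:ℝ)^n := by positivity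
    have hmul := mul_le_mul_of_nonneg_right hn hNpow.le
    calc c * (N:ℝ)^n = p * (N:ℝ)^n - (p - c) * (N:ℝ)^n := by ring
      _ ≤ p * (N:ℝ)^n - (2:ℝ) ^ (mf n) * (K ^ (n * mf n) * (N:ℝ)^n * p ^ (2 ^ (mf n))) := by
          nlinarith
      _ ≤ (S.card : ℝ) := by
          calc p * (N:ℝ)^n - (2:ℝ) ^ (mf n) * (K ^ (n * mf n) * (N:ℝ)^n * p ^ (2 ^ (mf n)))
              = p * (N:ℝ)^n - (2:ℝ) ^ (mf n) * (K ^ (n * mf n) * (N:ℝ)^n * p ^ (2 ^ (mf n))) := rfl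
            _ ≤ (S.card : ℝ) := by
                have : K ^ (n * mf n) * (N:ℝ)^n * p ^ (2 ^ (mf n))
                    = K ^ (n * mf n) * (N:ℝ)^n * p ^ (2 ^ (mf n)) := rfl
                linarith [hScard]
  set P : ℕ → Prop := fun n => ∃ S : Finset (Fin n → ℤ), S ⊆ box N n ∧
      c * (N:ℝ)^n ≤ (S.card : ℝ) ∧ ¬ HasCube (↑S : Set (Fin n → ℤ)) (mf n) with hP_def
  set Sseq : (n : ℕ) → Finset (Fin n → ℤ) := fun n => if h : P n then h.choose else box N n
    with hSseq_def
  have hsub : ∀ n, Sseq n ⊆ box N n := by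
    intro n
    by_cases h : P n
    · simp only [hSseq_def, dif_pos h]
      exact h.choose_spec.1
    · simp only [hSseq_def, dif_neg h]
      exact subset_refl _
  have hcard : ∀ n, c * (N:ℝ)^n ≤ ((Sseq n).card : ℝ) := by
    intro n
    by_cases h : P n
    · simp only [hSseq_def, dif_pos h]
      exact h.choose_spec.2.1
    · simp only [hSseq_def, dif_neg h]
      rw [card_box N n hN1]
      have hNpow : (0:ℝ) < (N:ℝ)^n := by positivity
      push_cast
      nlinarith
  refine ⟨Sseq, hsub, ?_, ?_⟩
  · -- liminf
    have hNpow : ∀ n : ℕ, (0:ℝ) < (N:ℝ)^n := fun n => by positivity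
    have hle : ∀ n : ℕ, c ≤ ((Sseq n).card : ℝ) / (N:ℝ)^n := by
      intro n
      rw [le_div_iff₀ (hNpow n)]
      exact hcard n
    have hub : ∀ n : ℕ, ((Sseq n).card : ℝ) / (N:ℝ)^n ≤ 1 := by
      intro n
      rw [div_le_one (hNpow n)]
      have := Finset.card_le_card (hsub n)
      rw [card_box N n hN1] at this
      exact_mod_cast this
    exact Filter.le_liminf_of_le
      (Filter.isCoboundedUnder_ge_of_le Filter.atTop hub)
      (Filter.Eventually.of_forall hle)
  · filter_upwards [hP, Filter.eventually_ge_atTop 1] with n hn hn1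
    have hS : Sseq n = hn.choose := by
      simp only [hSseq_def, dif_pos hn]
    have hnot : ¬ HasCube (↑(Sseq n) : Set (Fin n → ℤ)) (mf n) := by
      rw [hS]
      exact hn.choose_spec.2.2
    have hMval : Mval (↑(Sseq n) : Set (Fin n → ℤ)) ≤ mf n - 1 := mval_lt_of_not_hasCube hnot
    have hmf1 : mf n - 1 = ⌊(1 + δ) * Real.logb 2 n⌋₊ := by
      simp only [hmf_def, Nat.add_sub_cancel]
    have hfloor : ((⌊(1 + δ) * Real.logb 2 n⌋₊ : ℕ) : ℝ) ≤ (1 + δ) * Real.logb 2 n :=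
      Nat.floor_le (mul_nonneg (by linarith) (hlogb_nonneg n hn1))
    have hcast : ((Mval (↑(Sseq n) : Set (Fin n → ℤ)) : ℕ) : ℝ) ≤ (1 + δ) * Real.logb 2 n := by
      refine le_trans ?_ hfloor
      exact_mod_cast (hmf1 ▸ hMval)
    refine le_trans hcast ?_
    have := hlogb_nonneg n hn1
    rw [hδ_def]
    nlinarith
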